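/- Let X and Y be Banach spaces such that either X or Y has the Dunford–Pettis property, and let C1 ⊆ X and C2 ⊆ Y be relatively weakly compact sets. Then C1 ⊗ C2 := {x ⊗ y : x ∈ C1, y ∈ C2} is relatively weakly compact in the projective tensor product X ⊗̂π Y. -/

import Mathlib

open Filter Topology NormedSpace
open scoped ENNReal NNReal

/-- `Z`, together with the continuous bilinear map `m`, is (a realization of) the projective
tensor product `X ⊗̂π Y`: the span of elementary tensors is dense, and every continuous bilinear
map into a Banach space lifts to a continuous linear map on `Z` with the same norm. -/
structure IsProjTensorProduct (X Y Z : Type*) [NormedAddCommGroup X] [NormedSpace ℝ X]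
    [NormedAddCommGroup Y] [NormedSpace ℝ Y] [NormedAddCommGroup Z] [NormedSpace ℝ Z]
    (m : X →L[ℝ] Y →L[ℝ] Z) : Prop where
  dense_span : Dense (Submodule.span ℝ {z : Z | ∃ x y, m x y = z} : Set Z)
  lift : ∀ (W : Type) [NormedAddCommGroup W] [NormedSpace ℝ W] [CompleteSpace W]
    (B : X →L[ℝ] Y →L[ℝ] W), ∃ T : Z →L[ℝ] W, ‖T‖ = ‖B‖ ∧ ∀ x y, T (m x y) = B x y

/-- A set is relatively weakly compact if its closure in the weak topology is weakly compact. -/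
def RelWeakCompact (X : Type*) [SeminormedAddCommGroup X] [NormedSpace ℝ X] (A : Set X) : Prop :=
  IsCompact (closure ((toWeakSpace ℝ X) '' A))

/-- A set is relatively norm compact if its norm closure is compact. -/
def RelNormCompact (X : Type*) [SeminormedAddCommGroup X] [NormedSpace ℝ X] (A : Set X) : Prop :=
  IsCompact (closure A)

/-- A sequence is weakly Cauchy if every continuous functional sends it to a convergent sequence. -/
def WeaklyCauchySeq {X : Type*} [SeminormedAddCommGroup X] [NormedSpace ℝ X] (x : ℕ → X) : Prop :=
  ∀ f : X →L[ℝ] ℝ, ∃ l : ℝ, Tendsto (fun n => f (x n)) atTop (nhds l)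

/-- A sequence is weakly null if it converges to `0` in the weak topology. -/
def WeaklyNullSeq {X : Type*} [SeminormedAddCommGroup X] [NormedSpace ℝ X] (x : ℕ → X) : Prop :=
  ∀ f : X →L[ℝ] ℝ, Tendsto (fun n => f (x n)) atTop (nhds 0)

/-- A set is weakly precompact if every sequence in it has a weakly Cauchy subsequence. -/
def WeaklyPrecompact {X : Type*} [SeminormedAddCommGroup X] [NormedSpace ℝ X] (A : Set X) : Prop :=
  ∀ x : ℕ → X, (∀ n, x n ∈ A) → ∃ φ : ℕ → ℕ, StrictMono φ ∧ WeaklyCauchySeq (x ∘ φ)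

/-- A (weakly) compact operator maps the closed unit ball to a relatively (weakly) compact set. -/
def WeaklyCompactOp {X Y : Type*} [SeminormedAddCommGroup X] [NormedSpace ℝ X]
    [SeminormedAddCommGroup Y] [NormedSpace ℝ Y] (T : X →L[ℝ] Y) : Prop :=
  RelWeakCompact Y (T '' Metric.closedBall 0 1)

/-- The Dunford-Pettis property: for all weakly null sequences `(zₙ)` in `E` and `(φₙ)` in `E*`,
one has `φₙ(zₙ) → 0`. -/
def DunfordPettis (E : Type*) [NormedAddCommGroup E] [NormedSpace ℝ E] : Prop :=
  ∀ (z : ℕ → E) (φ : ℕ → E →L[ℝ] ℝ), WeaklyNullSeq z → WeaklyNullSeq φ →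
    Filter.Tendsto (fun n => φ n (z n)) Filter.atTop (nhds 0)

section Aux

open Set

variable {X : Type*} [NormedAddCommGroup X] [NormedSpace ℝ X]
  {Y : Type*} [NormedAddCommGroup Y] [NormedSpace ℝ Y]


variable {X : Type*} [NormedAddCommGroup X] [NormedSpace ℝ X]

lemma evalWeak_continuous (f : X →L[ℝ] ℝ) :
    Continuous fun z : WeakSpace ℝ X => f ((toWeakSpace ℝ X).symm z) :=
  WeakBilin.eval_continuous ((topDualPairing ℝ X).flip) f

instance : T2Space (WeakSpace ℝ X) := by
  constructor
  intro a b hab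
  have hx : (toWeakSpace ℝ X).symm a - (toWeakSpace ℝ X).symm b ≠ 0 := by
    intro h
    apply hab
    have : (toWeakSpace ℝ X).symm a = (toWeakSpace ℝ X).symm b := by
      rwa [sub_eq_zero] at h
    simpa using congrArg (toWeakSpace ℝ X) this
  obtain ⟨g, hg1, hg2⟩ := exists_dual_vector ℝ _ (norm_ne_zero_iff.mpr hx)
  have hgne : g ((toWeakSpace ℝ X).symm a) ≠ g ((toWeakSpace ℝ X).symm b) := by
    intro h
    rw [map_sub, h, sub_self] at hg2
    exact hx (by simpa [norm_eq_zero] using hg2.symm)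
  have := separated_by_continuous (evalWeak_continuous (X := X) g) hgne
  simpa using this

lemma dp_bilin_left (hDP : DunfordPettis X) (B : X →L[ℝ] Y →L[ℝ] ℝ)
    {u : ℕ → X} {v : ℕ → Y} {u0 : X} {v0 : Y}
    (hu : ∀ f : X →L[ℝ] ℝ, Tendsto (fun n => f (u n)) atTop (𝓝 (f u0)))
    (hv : ∀ g : Y →L[ℝ] ℝ, Tendsto (fun n => g (v n)) atTop (𝓝 (g v0))) :
    Tendsto (fun n => B (u n) (v n)) atTop (𝓝 (B u0 v0)) := by
  set z : ℕ → X := fun n => u n - u0 with hz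
  set φ : ℕ → X →L[ℝ] ℝ := fun n => B.flip (v n) - B.flip v0 with hφ
  have hznull : WeaklyNullSeq z := by
    intro f
    have := (hu f).sub_const (f u0)
    simpa [z, map_sub] using this
  have hφnull : WeaklyNullSeq φ := by
    intro F
    have := (hv (F.comp B.flip)).sub_const (F (B.flip v0))
    simpa [φ, map_sub] using this
  have hdp := hDP z φ hznull hφnull
  have h1 : Tendsto (fun n => B u0 (v n)) atTop (𝓝 (B u0 v0)) := hv (B u0)
  have h2 : Tendsto (fun n => B (u n) v0) atTop (𝓝 (B u0 v0)) := by
    have := hu (B.flip v0); simpa using this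
  have := ((hdp.add h1).add h2).sub_const (B u0 v0)
  have heq : (fun n => φ n (z n) + B u0 (v n) + B (u n) v0 - B u0 v0)
      = fun n => B (u n) (v n) := by
    funext n
    simp [φ, z, map_sub, ContinuousLinearMap.sub_apply, ContinuousLinearMap.flip_apply]
    ring
  rw [heq] at this
  simpa using this

lemma dp_bilin (hDP : DunfordPettis X ∨ DunfordPettis Y) (B : X →L[ℝ] Y →L[ℝ] ℝ)
    {u : ℕ → X} {v : ℕ → Y} {u0 : X} {v0 : Y}
    (hu : ∀ f : X →L[ℝ] ℝ, Tendsto (fun n => f (u n)) atTop (𝓝 (f u0)))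
    (hv : ∀ g : Y →L[ℝ] ℝ, Tendsto (fun n => g (v n)) atTop (𝓝 (g v0))) :
    Tendsto (fun n => B (u n) (v n)) atTop (𝓝 (B u0 v0)) := by
  rcases hDP with h | h
  · exact dp_bilin_left h B hu hv
  · have := dp_bilin_left h B.flip hv hu
    simpa [ContinuousLinearMap.flip_apply] using this

/-- Eberlein–Šmulian, easy direction: a weakly compact set is weakly sequentially compact. -/
lemma weak_seq_compact {K : Set (WeakSpace ℝ X)} (hK : IsCompact K)
    (x : ℕ → WeakSpace ℝ X) (hx : ∀ n, x n ∈ K) :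
    ∃ φ : ℕ → ℕ, StrictMono φ ∧ ∃ z ∈ K, Tendsto (x ∘ φ) atTop (𝓝 z) := by
  classical
  set sym := (toWeakSpace ℝ X).symm with hsym
  set xs : ℕ → X := fun n => sym (x n) with hxs
  -- the separable closed subspace generated by the sequence
  set N : Submodule ℝ X := (Submodule.span ℝ (Set.range xs)).topologicalClosure with hN
  have hNsep : TopologicalSpace.IsSeparable (N : Set X) := by
    have h1 : TopologicalSpace.IsSeparable (Set.range xs) :=
      (Set.countable_range xs).isSeparable
    have h2 := h1.span (R := ℝ)
    have : (N : Set X) = closure ((Submodule.span ℝ (Set.range xs) : Submodule ℝ X) : Set X) := rfl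
    rw [this]
    exact h2.closure
  -- `W`, the weak version of `N`, is weakly closed (Mazur)
  set W : Set (WeakSpace ℝ X) := (toWeakSpace ℝ X) '' (N : Set X) with hW
  have hWclosed : IsClosed W := by
    have hconv : Convex ℝ (N : Set X) := N.convex
    have hcl : closure (N : Set X) = (N : Set X) :=
      (Submodule.isClosed_topologicalClosure _).closure_eq
    have h3 := hconv.toWeakSpace_closure (𝕜 := ℝ)
    rw [hcl] at h3
    rw [hW, h3]
    exact isClosed_closure
  -- a countable family of functionals separating points of `N`
  obtain ⟨c, hc_count, hc_sub⟩ := hNsep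
  have hc_ne : c.Nonempty := by
    rcases Set.eq_empty_or_nonempty c with h | h
    · exfalso
      have h0 : (0 : X) ∈ (N : Set X) := N.zero_mem
      have := hc_sub h0
      rw [h] at this
      simpa using this
    · exact h
  obtain ⟨e, he⟩ := hc_count.exists_eq_range hc_ne
  have hgex : ∀ j : ℕ, ∃ g : X →L[ℝ] ℝ, ‖g‖ ≤ 1 ∧ g (e j) = ‖e j‖ := fun j =>
    exists_dual_vector'' ℝ (e j)
  choose g hg1 hg2 using hgex
  have hsep : ∀ u ∈ (N : Set X), (∀ j, g j u = 0) → u = 0 := by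
    intro u hu hg0
    have hu' : u ∈ closure c := hc_sub hu
    obtain ⟨d, hd_mem, hd_lim⟩ := mem_closure_iff_seq_limit.mp hu'
    have hdist : ∀ k, ‖d k‖ ≤ ‖d k - u‖ := by
      intro k
      obtain ⟨j, hj⟩ : ∃ j, e j = d k := by
        have := hd_mem k
        rw [he] at this
        obtain ⟨j, hj⟩ := this
        exact ⟨j, hj⟩
      have h1 : g j (d k) = ‖d k‖ := by rw [← hj]; exact hg2 j
      have h2 : g j (d k) = g j (d k - u) := by rw [map_sub, hg0 j, sub_zero]
      calc ‖d k‖ = g j (d k - u) := by rw [← h1, h2]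
        _ ≤ ‖g j (d k - u)‖ := le_abs_self _
        _ ≤ ‖g j‖ * ‖d k - u‖ := (g j).le_opNorm _
        _ ≤ 1 * ‖d k - u‖ := by
            exact mul_le_mul_of_nonneg_right (hg1 j) (norm_nonneg _)
        _ = ‖d k - u‖ := one_mul _
    have hlim1 : Tendsto (fun k => ‖d k‖) atTop (𝓝 ‖u‖) := (continuous_norm.tendsto u).comp hd_lim
    have hlim2 : Tendsto (fun k => ‖d k - u‖) atTop (𝓝 0) := by
      have : Tendsto (fun k => d k - u) atTop (𝓝 (u - u)) := hd_lim.sub_const u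
      rw [sub_self] at this
      simpa [Function.comp_def] using (continuous_norm.tendsto (0 : X)).comp this
    have : ‖u‖ ≤ 0 := le_of_tendsto_of_tendsto hlim1 hlim2 (Eventually.of_forall hdist)
    simpa using le_antisymm this (norm_nonneg u)
  -- the compact set C and the injective evaluation map
  set C : Set (WeakSpace ℝ X) := K ∩ W with hC
  have hCcomp : IsCompact C := hK.inter_right hWclosed
  have hxC : ∀ n, x n ∈ C := by
    intro n
    refine ⟨hx n, ⟨xs n, ?_, by simp [xs, sym]⟩⟩
    exact Submodule.le_topologicalClosure _ (Submodule.subset_span (Set.mem_range_self n))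
  set ev : WeakSpace ℝ X → (ℕ → ℝ) := fun z j => g j (sym z) with hev
  have hev_cont : Continuous ev :=
    continuous_pi fun j => evalWeak_continuous (g j)
  have hinj : ∀ a ∈ C, ∀ b ∈ C, ev a = ev b → a = b := by
    intro a ha b hb hab
    obtain ⟨a', ha', rfl⟩ := ha.2
    obtain ⟨b', hb', rfl⟩ := hb.2
    have hsub : a' - b' ∈ (N : Set X) := N.sub_mem ha' hb'
    have : a' - b' = 0 := by
      refine hsep _ hsub fun j => ?_
      have := congrFun hab j
      simp only [ev, sym] at this
      simp only [LinearEquiv.symm_apply_apply] at this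
      rw [map_sub, this, sub_self]
    have : a' = b' := by rwa [sub_eq_zero] at this
    rw [this]
  -- extract a convergent subsequence of the evaluations
  have hevC : IsCompact (ev '' C) := hCcomp.image hev_cont
  obtain ⟨p, hpC, φ, hφ, hp⟩ := hevC.tendsto_subseq (fun n => Set.mem_image_of_mem ev (hxC n))
  obtain ⟨z₀, hz₀C, rfl⟩ := hpC
  refine ⟨φ, hφ, z₀, hz₀C.1, ?_⟩
  -- show that the subsequence converges weakly to z₀, by uniqueness of cluster points
  by_contra hcon
  obtain ⟨U, hU, hfreq⟩ := not_tendsto_iff_exists_frequently_notMem.mp hcon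
  obtain ⟨U', hU'sub, hU'o, hU'z⟩ := mem_nhds_iff.mp hU
  replace hfreq : ∃ᶠ k in atTop, (x ∘ φ) k ∈ C \ U' := by
    refine hfreq.mono fun k hk => ⟨hxC (φ k), fun hmem => hk (hU'sub hmem)⟩
  haveI hG : NeBot (atTop ⊓ 𝓟 {k | (x ∘ φ) k ∈ C \ U'}) := frequently_iff_neBot.mp hfreq
  set G := map (x ∘ φ) (atTop ⊓ 𝓟 {k | (x ∘ φ) k ∈ C \ U'}) with hGdef
  haveI hGne : G.NeBot := Filter.map_neBot
  have hGC : G ≤ 𝓟 (C \ U') := by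
    rw [le_principal_iff]
    exact mem_map.mpr (mem_inf_of_right (mem_principal_self _))
  have hGK : G ≤ 𝓟 C := hGC.trans (principal_mono.mpr Set.diff_subset)
  obtain ⟨w, hwC, hw⟩ := hCcomp.exists_clusterPt hGK
  have hwcl : w ∈ closure (C \ U') := mem_closure_iff_clusterPt.mpr (hw.mono hGC)
  have h1 : ClusterPt (ev w) (map ev G) := hw.map hev_cont.continuousAt tendsto_map
  have h2 : map ev G ≤ 𝓝 (ev z₀) := by
    calc map ev G ≤ map ev (map (x ∘ φ) atTop) := map_mono (map_mono inf_le_left)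
      _ = map (ev ∘ (x ∘ φ)) atTop := map_map
      _ ≤ 𝓝 (ev z₀) := hp
  have h3 : ev w = ev z₀ := eq_of_nhds_neBot (h1.mono h2)
  have h4 : w = z₀ := hinj w hwC z₀ hz₀C h3
  rw [h4] at hwcl
  obtain ⟨q, hq1, hq2⟩ := mem_closure_iff.mp hwcl U' hU'o hU'z
  exact hq2.2 hq1

lemma key_cont (B : X →L[ℝ] Y →L[ℝ] ℝ) (hDP : DunfordPettis X ∨ DunfordPettis Y)
    {K1 : Set (WeakSpace ℝ X)} {K2 : Set (WeakSpace ℝ Y)}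
    (h1 : IsCompact K1) (h2 : IsCompact K2) :
    ContinuousOn (fun p : WeakSpace ℝ X × WeakSpace ℝ Y =>
      B ((toWeakSpace ℝ X).symm p.1) ((toWeakSpace ℝ Y).symm p.2)) (K1 ×ˢ K2) := by
  classical
  set symX := (toWeakSpace ℝ X).symm with hsymX
  set symY := (toWeakSpace ℝ Y).symm with hsymY
  set h : WeakSpace ℝ X × WeakSpace ℝ Y → ℝ := fun p => B (symX p.1) (symY p.2) with hh
  show ContinuousOn h (K1 ×ˢ K2)
  rintro ⟨x, y⟩ hxy
  set s := K1 ×ˢ K2 with hs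
  by_contra hcon
  set b : ℝ := B (symX x) (symY y) with hb
  have hcon2 : ¬ Tendsto h (𝓝[s] (x, y)) (𝓝 b) := hcon
  rw [Metric.tendsto_nhds] at hcon2
  push_neg at hcon2
  obtain ⟨ε, hε, hfreq0⟩ := hcon2
  have hfreq : ∃ᶠ p in 𝓝[s] (x, y), ε ≤ dist (h p) b := by
    refine hfreq0.mono fun p hp => hp
  haveI hGne : NeBot ((𝓝[s] (x, y)) ⊓ 𝓟 {p | ε ≤ dist (h p) b}) :=
    frequently_iff_neBot.mp hfreq
  set G := (𝓝[s] (x, y)) ⊓ 𝓟 {p | ε ≤ dist (h p) b} with hGdef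
  set h' : WeakSpace ℝ X × WeakSpace ℝ Y → EReal := fun p => ((h p : ℝ) : EReal) with hh'
  haveI : NeBot (map h' G) := Filter.map_neBot
  obtain ⟨c, hc⟩ := exists_clusterPt_of_compactSpace (map h' G)
  set Cl : Set EReal := Set.Iic ((b - ε : ℝ) : EReal) ∪ Set.Ici ((b + ε : ℝ) : EReal) with hCl
  have hClclosed : IsClosed Cl := isClosed_Iic.union isClosed_Ici
  have hClmem : Cl ∈ map h' G := by
    rw [mem_map]
    have hsub : {p | ε ≤ dist (h p) b} ⊆ h' ⁻¹' Cl := by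
      intro p hp
      simp only [Set.mem_setOf_eq, Real.dist_eq] at hp
      rcases le_abs.mp hp with hle | hle
      · right
        simp only [Set.mem_Ici]
        have hbe : b + ε ≤ h p := by linarith
        show ((b + ε : ℝ) : EReal) ≤ ((h p : ℝ) : EReal)
        exact_mod_cast hbe
      · left
        simp only [Set.mem_Iic]
        have hbe : h p ≤ b - ε := by linarith
        show ((h p : ℝ) : EReal) ≤ ((b - ε : ℝ) : EReal)
        exact_mod_cast hbe
    exact mem_of_superset (mem_inf_of_right (mem_principal_self _)) hsub
  have hcCl : c ∈ Cl := by
    have := mem_closure_iff_clusterPt.mpr (hc.mono (le_principal_iff.mpr hClmem))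
    rwa [hClclosed.closure_eq] at this
  haveI hHne : NeBot (G ⊓ comap h' (𝓝 c)) := by
    rw [← Filter.map_neBot_iff h', Filter.push_pull]
    have := hc.neBot
    rwa [inf_comm] at this
  set H := G ⊓ comap h' (𝓝 c) with hH
  have hHs : H ≤ 𝓟 s := le_trans inf_le_left (le_trans inf_le_left inf_le_right)
  have hHn : H ≤ 𝓝 (x, y) := le_trans inf_le_left (le_trans inf_le_left inf_le_left)
  have hHt : Tendsto h' H (𝓝 c) := tendsto_iff_comap.mpr inf_le_right
  obtain ⟨V, hV⟩ := (𝓝 c).exists_antitone_basis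
  -- finite collections of constraints are neighborhoods
  have h4 : ∀ (L : List Y) (δ : ℝ), 0 < δ →
      {p : WeakSpace ℝ X × WeakSpace ℝ Y | ∀ w ∈ L, |B (symX p.1) w - B (symX x) w| < δ}
        ∈ 𝓝 (x, y) := by
    intro L δ hδ
    induction L with
    | nil => simp
    | cons a L ih =>
      have hsingle : {p : WeakSpace ℝ X × WeakSpace ℝ Y |
          |B (symX p.1) a - B (symX x) a| < δ} ∈ 𝓝 (x, y) := by
        have hcont : Continuous fun p : WeakSpace ℝ X × WeakSpace ℝ Y => B (symX p.1) a := by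
          have : ∀ q : X, B q a = (B.flip a) q := fun q => rfl
          simp only [this]
          exact (evalWeak_continuous (B.flip a)).comp continuous_fst
        have heq : {p : WeakSpace ℝ X × WeakSpace ℝ Y | |B (symX p.1) a - B (symX x) a| < δ}
            = (fun p : WeakSpace ℝ X × WeakSpace ℝ Y => B (symX p.1) a) ⁻¹'
              (Metric.ball (B (symX x) a) δ) := by
          ext p; simp [Metric.mem_ball, Real.dist_eq]
        rw [heq]
        exact (Metric.isOpen_ball.preimage hcont).mem_nhds (by simp [Metric.mem_ball, hδ])
      have := Filter.inter_mem hsingle (ih)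
      refine mem_of_superset this ?_
      intro p hp
      simp only [Set.mem_inter_iff, Set.mem_setOf_eq] at hp ⊢
      intro w hw
      rcases List.mem_cons.mp hw with rfl | hw
      · exact hp.1
      · exact hp.2 w hw
  set E : ℕ → List Y → Set (WeakSpace ℝ X × WeakSpace ℝ Y) := fun n L =>
    {p | p ∈ s ∧ h' p ∈ V n ∧ |B (symX x) (symY p.2) - b| < 1/(n+1) ∧
         ∀ w ∈ L, |B (symX p.1) w - B (symX x) w| < 1/(n+1)} with hE
  have hEmem : ∀ n (L : List Y), E n L ∈ H := by
    intro n L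
    have m1 : s ∈ H := hHs (mem_principal_self s)
    have m2 : h' ⁻¹' (V n) ∈ H := mem_map.mp (hHt (hV.1.mem_of_mem trivial))
    have m3 : {p : WeakSpace ℝ X × WeakSpace ℝ Y |
        |B (symX x) (symY p.2) - b| < 1/(n+1)} ∈ H := by
      refine hHn ?_
      have hcont : Continuous fun p : WeakSpace ℝ X × WeakSpace ℝ Y => B (symX x) (symY p.2) :=
        (evalWeak_continuous (B (symX x))).comp continuous_snd
      have heq : {p : WeakSpace ℝ X × WeakSpace ℝ Y | |B (symX x) (symY p.2) - b| < 1/(n+1)}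
          = (fun p : WeakSpace ℝ X × WeakSpace ℝ Y => B (symX x) (symY p.2)) ⁻¹'
            (Metric.ball b (1/(n+1))) := by
        ext p; simp [Metric.mem_ball, Real.dist_eq]
      rw [heq]
      refine (Metric.isOpen_ball.preimage hcont).mem_nhds ?_
      simp only [Set.mem_preimage, Metric.mem_ball, hb]
      rw [dist_self]
      positivity
    have m4 : {p : WeakSpace ℝ X × WeakSpace ℝ Y |
        ∀ w ∈ L, |B (symX p.1) w - B (symX x) w| < 1/(n+1)} ∈ H :=
      hHn (h4 L _ (by positivity))
    filter_upwards [m1, m2, m3, m4] with p p1 p2 p3 p4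
    exact ⟨p1, p2, p3, p4⟩
  have hEne : ∀ n (L : List Y), (E n L).Nonempty := fun n L =>
    Filter.nonempty_of_mem (hEmem n L)
  have hEch : ∀ n (L : List Y), ∃ p, p ∈ E n L := fun n L => hEne n L
  choose P hP using hEch
  let LL : ℕ → List Y := fun n => Nat.rec ([] : List Y) (fun k ih => ih ++ [symY (P k ih).2]) n
  set p : ℕ → WeakSpace ℝ X × WeakSpace ℝ Y := fun n => P n (LL n) with hpdef
  set u : ℕ → X := fun n => symX (p n).1 with hu
  set v : ℕ → Y := fun n => symY (p n).2 with hv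
  have hLLsucc : ∀ n, LL (n+1) = LL n ++ [v n] := fun n => rfl
  have hvLL : ∀ m n, m < n → v m ∈ LL n := by
    intro m n hmn
    induction n with
    | zero => omega
    | succ k ih =>
      rw [hLLsucc]
      rcases Nat.lt_succ_iff_lt_or_eq.mp hmn with hc' | hc'
      · exact List.mem_append_left _ (ih hc')
      · subst hc'; exact List.mem_append_right _ (List.mem_singleton_self _)
  have hps : ∀ n, p n ∈ s := fun n => (hP n (LL n)).1
  have hpV : ∀ n, h' (p n) ∈ V n := fun n => (hP n (LL n)).2.1
  have hp3 : ∀ n, |B (symX x) (v n) - b| < 1/(n+1) := fun n => (hP n (LL n)).2.2.1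
  have hp4 : ∀ n, ∀ w ∈ LL n, |B (u n) w - B (symX x) w| < 1/(n+1) :=
    fun n => (hP n (LL n)).2.2.2
  -- extract weakly convergent subsequences
  obtain ⟨φ, hφ, z1, hz1K, hz1⟩ := weak_seq_compact h1 (fun n => (p n).1)
    (fun n => (Set.mem_prod.mp (hps n)).1)
  obtain ⟨φ2, hφ2, z2, hz2K, hz2⟩ := weak_seq_compact h2 (fun k => (p (φ k)).2)
    (fun k => (Set.mem_prod.mp (hps (φ k))).2)
  set ψ : ℕ → ℕ := fun k => φ (φ2 k) with hψdef
  have hψ : StrictMono ψ := hφ.comp hφ2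
  set uLim : X := symX z1 with huLimdef
  set vLim : Y := symY z2 with hvLimdef
  have huLim : ∀ f : X →L[ℝ] ℝ, Tendsto (fun k => f (u (ψ k))) atTop (𝓝 (f uLim)) := by
    intro f
    have hbase : Tendsto (fun k => (p (ψ k)).1) atTop (𝓝 z1) :=
      hz1.comp hφ2.tendsto_atTop
    exact ((evalWeak_continuous f).tendsto z1).comp hbase
  have hvLim : ∀ g : Y →L[ℝ] ℝ, Tendsto (fun k => g (v (ψ k))) atTop (𝓝 (g vLim)) := by
    intro g
    exact ((evalWeak_continuous g).tendsto z2).comp hz2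
  have hlimA : Tendsto (fun k => B (u (ψ k)) (v (ψ k))) atTop (𝓝 (B uLim vLim)) :=
    dp_bilin hDP B huLim hvLim
  have hlimB : Tendsto (fun k => h' (p (ψ k))) atTop (𝓝 c) :=
    hV.tendsto fun k => hV.2 (hψ.le_apply) (hpV (ψ k))
  have hlimB' : Tendsto (fun k => h' (p (ψ k))) atTop (𝓝 ((B uLim vLim : ℝ) : EReal)) := by
    have : (fun k => h' (p (ψ k))) = fun k => ((B (u (ψ k)) (v (ψ k)) : ℝ) : EReal) := rfl
    rw [this]
    exact (continuous_coe_real_ereal.tendsto _).comp hlimA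
  have hc_eq : c = ((B uLim vLim : ℝ) : EReal) := tendsto_nhds_unique hlimB hlimB'
  -- auxiliary: 1/(ψ k + 1) → 0
  have hone : Tendsto (fun k => 1/((ψ k : ℝ)+1)) atTop (𝓝 0) :=
    tendsto_one_div_add_atTop_nhds_zero_nat.comp hψ.tendsto_atTop
  -- step 1
  have step1 : ∀ j, B uLim (v (ψ j)) = B (symX x) (v (ψ j)) := by
    intro j
    have hA : Tendsto (fun k => B (u (ψ k)) (v (ψ j))) atTop (𝓝 (B uLim (v (ψ j)))) := by
      have := huLim (B.flip (v (ψ j)))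
      simpa using this
    have hB : Tendsto (fun k => B (u (ψ k)) (v (ψ j))) atTop (𝓝 (B (symX x) (v (ψ j)))) := by
      have hzero : Tendsto (fun k => B (u (ψ k)) (v (ψ j)) - B (symX x) (v (ψ j)))
          atTop (𝓝 0) := by
        apply squeeze_zero_norm' (a := fun k => 1/((ψ k : ℝ)+1)) ?_ hone
        filter_upwards [Filter.eventually_gt_atTop j] with k hk
        have := hp4 (ψ k) (v (ψ j)) (hvLL (ψ j) (ψ k) (hψ hk))
        simpa [Real.norm_eq_abs] using this.le
      have := hzero.add_const (B (symX x) (v (ψ j)))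
      simpa using this
    exact tendsto_nhds_unique hA hB
  -- step 3
  have step3 : B (symX x) vLim = b := by
    have hA := hvLim (B (symX x))
    have hB : Tendsto (fun k => B (symX x) (v (ψ k))) atTop (𝓝 b) := by
      have hzero : Tendsto (fun k => B (symX x) (v (ψ k)) - b) atTop (𝓝 0) := by
        apply squeeze_zero_norm' (a := fun k => 1/((ψ k : ℝ)+1)) ?_ hone
        filter_upwards with k
        simpa [Real.norm_eq_abs] using (hp3 (ψ k)).le
      have := hzero.add_const b
      simpa using this
    exact tendsto_nhds_unique hA hB
  -- step 2
  have step2 : B uLim vLim = B (symX x) vLim := by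
    have e1 := hvLim (B uLim)
    have e2 := hvLim (B (symX x))
    have e1' : Tendsto (fun j => B (symX x) (v (ψ j))) atTop (𝓝 (B uLim vLim)) := by
      have heq : (fun j => B uLim (v (ψ j))) = fun j => B (symX x) (v (ψ j)) :=
        funext step1
      rwa [heq] at e1
    exact tendsto_nhds_unique e1' e2
  have hfinal : B uLim vLim = b := step2.trans step3
  rw [hfinal] at hc_eq
  rcases hcCl with hle | hle
  · rw [hc_eq] at hle
    simp only [Set.mem_Iic] at hle
    have : b ≤ b - ε := by exact_mod_cast hle
    linarith
  · rw [hc_eq] at hle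
    simp only [Set.mem_Ici] at hle
    have : b + ε ≤ b := by exact_mod_cast hle
    linarith

end Aux

theorem stmt4 {X Y Z : Type*} [NormedAddCommGroup X] [NormedSpace ℝ X] [CompleteSpace X] [NormedAddCommGroup Y] [NormedSpace ℝ Y] [CompleteSpace Y] [NormedAddCommGroup Z] [NormedSpace ℝ Z] [CompleteSpace Z]
    (m : X →L[ℝ] Y →L[ℝ] Z) (hm : IsProjTensorProduct X Y Z m)
    (hDP : DunfordPettis X ∨ DunfordPettis Y)
    (C1 : Set X) (C2 : Set Y) (hC1 : RelWeakCompact X C1) (hC2 : RelWeakCompact Y C2) :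
    RelWeakCompact Z (Set.image2 (fun x y => m x y) C1 C2) := by
  classical
  have h1 : IsCompact (closure ((toWeakSpace ℝ X) '' C1)) := hC1
  have h2 : IsCompact (closure ((toWeakSpace ℝ Y) '' C2)) := hC2
  set K1 : Set (WeakSpace ℝ X) := closure ((toWeakSpace ℝ X) '' C1) with hK1def
  set K2 : Set (WeakSpace ℝ Y) := closure ((toWeakSpace ℝ Y) '' C2) with hK2def
  set β : WeakSpace ℝ X × WeakSpace ℝ Y → WeakSpace ℝ Z := fun p =>
    toWeakSpace ℝ Z (m ((toWeakSpace ℝ X).symm p.1) ((toWeakSpace ℝ Y).symm p.2)) with hβ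
  have hcont : ContinuousOn β (K1 ×ˢ K2) := by
    rw [continuousOn_iff_continuous_restrict]
    apply WeakBilin.continuous_of_continuous_eval
    intro T
    have hB := key_cont ((ContinuousLinearMap.compL ℝ Y Z ℝ T).comp m) hDP h1 h2
    rw [continuousOn_iff_continuous_restrict] at hB
    exact hB
  have himg : IsCompact (β '' (K1 ×ˢ K2)) := (h1.prod h2).image_of_continuousOn hcont
  have hclosed : IsClosed (β '' (K1 ×ˢ K2)) := himg.isClosed
  have hsub : (toWeakSpace ℝ Z) '' (Set.image2 (fun x y => m x y) C1 C2)
      ⊆ β '' (K1 ×ˢ K2) := by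
    rintro - ⟨-, ⟨a, ha, bb, hbb, rfl⟩, rfl⟩
    refine ⟨(toWeakSpace ℝ X a, toWeakSpace ℝ Y bb),
      ⟨subset_closure ⟨a, ha, rfl⟩, subset_closure ⟨bb, hbb, rfl⟩⟩, ?_⟩
    simp [β]
  exact himg.of_isClosed_subset isClosed_closure (closure_minimal hsub hclosed)
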